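/- Let λ_o ∈ (0, 1/2), μ_o = 1 - λ_o, λ_i ∈ [λ_o, 1], μ_i = 1 - λ_i, γ ∈ (0, 1), 0 ≤ C_i ≤ C_c with C_c > 0, and φ = (1 - √(1 - 4λ_o μ_o γ²)) / (2λ_o γ). If γ(λ_i - λ_o)(1 - φ²) > C_i / C_c, then at health state h = 1 the intensive action strictly improves on the always-ordinary value function V_o(h) = φ^h C_c; that is, C_i + γ(λ_i V_o(2) + μ_i V_o(0)) < γ(λ_o V_o(2) + μ_o V_o(0)) = V_o(1). Consequently the always-ordinary policy is not optimal. -/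

import Mathlib

/-- If `gam*(li - lo)*(1 - phi^2) > Ci/Cc`, then at health state
`h = 1` the intensive action strictly improves on the always-ordinary value
function `V_o h = phi^h * Cc`. -/
theorem stmt_7 (lo mo li mi gam Ci Cc phi : ℝ)
    (hlo0 : 0 < lo) (hlo : lo < 1/2) (hmo : mo = 1 - lo)
    (hli : li ∈ Set.Icc lo 1) (hmi : mi = 1 - li)
    (hgam0 : 0 < gam) (hgam1 : gam < 1)
    (hCi0 : 0 ≤ Ci) (hCiCc : Ci ≤ Cc) (hCc : 0 < Cc)
    (hphi : phi = (1 - Real.sqrt (1 - 4*lo*mo*gam^2)) / (2*lo*gam))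
    (hcond : Ci / Cc < gam * (li - lo) * (1 - phi ^ 2))
    (Vo : ℕ → ℝ) (hVo : ∀ h : ℕ, Vo h = phi ^ h * Cc) :
    Ci + gam * (li * Vo 2 + mi * Vo 0) < gam * (lo * Vo 2 + mo * Vo 0) ∧
    gam * (lo * Vo 2 + mo * Vo 0) = Vo 1 := by
  subst hmo hmi
  have hD : 0 ≤ 1 - 4*lo*(1-lo)*gam^2 := by nlinarith [sq_nonneg (1 - 2*lo), sq_nonneg gam, sq_nonneg (1-gam)]
  have hs := Real.sq_sqrt hD
  have hne : 2*lo*gam ≠ 0 := by positivity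
  have hquad : gam * lo * phi^2 + gam * (1-lo) = phi := by
    rw [hphi]
    have hlo' : lo ≠ 0 := ne_of_gt hlo0
    have hgam' : gam ≠ 0 := ne_of_gt hgam0
    field_simp
    linear_combination Real.sq_sqrt (show (0:ℝ) ≤ 1 - gam^2*lo*4*(1-lo) by linarith)
  have h2 : gam * (lo * Vo 2 + (1-lo) * Vo 0) = Vo 1 := by
    rw [hVo 2, hVo 0, hVo 1]
    ring_nf
    nlinarith [hquad]
  refine ⟨?_, h2⟩
  have hcond' : Ci < gam * (li - lo) * (1 - phi ^ 2) * Cc := by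
    rw [div_lt_iff₀ hCc] at hcond
    linarith
  rw [hVo 2, hVo 0]
  nlinarith [hcond']
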